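/- Work on a probability space (Ω, 𝒜, P) equipped with a filtration (ℱ_k)_{k∈ℕ} of sub-σ-algebras of 𝒜, and let p ∈ [0,1]. For each k ∈ ℕ let W_k be a {0,1}-valued ℱ_k-measurable random variable and let E_k ∈ 𝒜 be an event with P[E_k | ℱ_k] ≥ p almost surely. Let N : Ω → ℕ ∪ {∞} satisfy {k < N} ∈ ℱ_k for every k ∈ ℕ. Then E[Σ_{k<N} W_k·1_{E_k}] ≥ p·E[Σ_{k<N} W_k], where sums and expectations of nonnegative quantities take values in [0,∞]. -/

import Mathlib

open MeasureTheory
open scoped ENNReal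

/-- Inequality (3.18) of the paper (Cartis–Scheinberg, Lemma 2.1): if each event `E k`
has conditional probability at least `p` given `ℱ k`, `W k` is a `{0,1}`-valued
`ℱ k`-measurable weight, and `{k < N} ∈ ℱ k`, then
`E[Σ_{k<N} W_k·1_{E_k}] ≥ p·E[Σ_{k<N} W_k]`. -/
theorem expected_weighted_accurate_ge
    {Ω : Type*} {mΩ : MeasurableSpace Ω} (μ : Measure Ω) [IsProbabilityMeasure μ]
    (ℱ : Filtration ℕ mΩ) (p : ℝ) (hp0 : 0 ≤ p) (hp1 : p ≤ 1)
    (W : ℕ → Ω → ℝ)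
    (hW01 : ∀ k ω, W k ω = 0 ∨ W k ω = 1)
    (hWmeas : ∀ k, Measurable[ℱ k] (W k))
    (E : ℕ → Set Ω) (hE : ∀ k, MeasurableSet (E k))
    (hEp : ∀ k, ∀ᵐ ω ∂μ,
      p ≤ (μ[(E k).indicator (fun _ => (1 : ℝ)) | ℱ k]) ω)
    (N : Ω → ℕ∞)
    (hN : ∀ k, MeasurableSet[ℱ k] {ω | (k : ℕ∞) < N ω}) :
    ENNReal.ofReal p *
        ∫⁻ ω, ∑' (k : ℕ), ({ω' | (k : ℕ∞) < N ω'}.indicator (fun _ => (1 : ℝ≥0∞)) ω) *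
          ENNReal.ofReal (W k ω) ∂μ
      ≤ ∫⁻ ω, ∑' (k : ℕ), ({ω' | (k : ℕ∞) < N ω'}.indicator (fun _ => (1 : ℝ≥0∞)) ω) *
          ENNReal.ofReal (W k ω) * ((E k).indicator (fun _ => (1 : ℝ≥0∞)) ω) ∂μ := by
  classical
  have hm : ∀ k, ℱ k ≤ mΩ := fun k => ℱ.le k
  set S : ℕ → Set Ω := fun k => {ω | (k : ℕ∞) < N ω} with hS
  set A : ℕ → Set Ω := fun k => S k ∩ (W k) ⁻¹' {1} with hA
  have hAF : ∀ k, MeasurableSet[ℱ k] (A k) := fun k =>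
    (hN k).inter (hWmeas k (measurableSet_singleton 1))
  have hAmeas : ∀ k, MeasurableSet (A k) := fun k => hm k _ (hAF k)
  have hL : ∀ k ω, (S k).indicator (fun _ => (1 : ℝ≥0∞)) ω * ENNReal.ofReal (W k ω)
      = (A k).indicator (fun _ => (1 : ℝ≥0∞)) ω := by
    intro k ω
    rcases hW01 k ω with h | h <;> by_cases hs : ω ∈ S k <;>
      simp [Set.indicator_apply, hA, h, hs, Set.mem_inter_iff, Set.mem_preimage]
  have hR : ∀ k ω, (S k).indicator (fun _ => (1 : ℝ≥0∞)) ω * ENNReal.ofReal (W k ω) *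
      ((E k).indicator (fun _ => (1 : ℝ≥0∞)) ω)
      = ((A k) ∩ E k).indicator (fun _ => (1 : ℝ≥0∞)) ω := by
    intro k ω
    rw [hL k ω]
    by_cases ha : ω ∈ A k <;> by_cases he : ω ∈ E k <;>
      simp [Set.indicator_apply, ha, he, Set.mem_inter_iff]
  have hLint : (∫⁻ ω, ∑' (k : ℕ), (S k).indicator (fun _ => (1 : ℝ≥0∞)) ω *
      ENNReal.ofReal (W k ω) ∂μ) = ∑' k, μ (A k) := by
    simp_rw [hL]
    rw [lintegral_tsum (f := fun k ω => (A k).indicator (fun _ => (1 : ℝ≥0∞)) ω)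
      (fun k => ((measurable_one.indicator (hAmeas k)).aemeasurable))]
    simp_rw [lintegral_indicator (hAmeas _)]
    simp
  have hRint : (∫⁻ ω, ∑' (k : ℕ), (S k).indicator (fun _ => (1 : ℝ≥0∞)) ω *
      ENNReal.ofReal (W k ω) * ((E k).indicator (fun _ => (1 : ℝ≥0∞)) ω) ∂μ)
      = ∑' k, μ (A k ∩ E k) := by
    simp_rw [hR]
    rw [lintegral_tsum (f := fun k ω => ((A k) ∩ E k).indicator (fun _ => (1 : ℝ≥0∞)) ω)
      (fun k => ((measurable_one.indicator ((hAmeas k).inter (hE k))).aemeasurable))]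
    simp_rw [lintegral_indicator ((hAmeas _).inter (hE _))]
    simp
  rw [hLint, hRint, ← ENNReal.tsum_mul_left]
  refine ENNReal.tsum_le_tsum fun k => ?_
  -- per-index inequality
  set f : Ω → ℝ := (E k).indicator (fun _ => (1 : ℝ)) with hf
  have hInt : Integrable f μ := (integrable_const (1 : ℝ)).indicator (hE k)
  have h1 : ∫ x in A k, (μ[f | ℱ k]) x ∂μ = ∫ x in A k, f x ∂μ :=
    setIntegral_condExp (hm k) hInt (hAF k)
  have h2 : ∫ x in A k, f x ∂μ = (μ (A k ∩ E k)).toReal := by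
    rw [hf, setIntegral_indicator (hE k)]
    simp [measureReal_def]
  have h3 : p * (μ (A k)).toReal ≤ ∫ x in A k, (μ[f | ℱ k]) x ∂μ := by
    have hc : ∫ _ in A k, p ∂μ = p * (μ (A k)).toReal := by
      simp [mul_comm, measureReal_def]
    rw [← hc]
    exact integral_mono_ae (integrable_const p) integrable_condExp.integrableOn
      (ae_restrict_of_ae (hEp k))
  have hreal : p * (μ (A k)).toReal ≤ (μ (A k ∩ E k)).toReal := by
    calc p * (μ (A k)).toReal ≤ ∫ x in A k, (μ[f | ℱ k]) x ∂μ := h3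
      _ = (μ (A k ∩ E k)).toReal := by rw [h1, h2]
  calc ENNReal.ofReal p * μ (A k)
      = ENNReal.ofReal (p * (μ (A k)).toReal) := by
        rw [ENNReal.ofReal_mul hp0, ENNReal.ofReal_toReal (measure_ne_top μ _)]
    _ ≤ ENNReal.ofReal ((μ (A k ∩ E k)).toReal) := ENNReal.ofReal_le_ofReal hreal
    _ = μ (A k ∩ E k) := ENNReal.ofReal_toReal (measure_ne_top μ _)
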